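/- Let 0 < α < 1, let m ≥ 1 be an integer, and let Y ⊆ [0,1]^k ⊂ ℝ^k be a finite set such that |u - v| > α·√k for every two distinct points u, v ∈ Y. Then |Y| ≤ 2m · ⌈ √( (1/2)·(1 + 1/(2m-1)) ) / α ⌉^k. -/

import Mathlib

open Finset in
private lemma sum_sq_expand {ι : Type*} (S : Finset ι) (a : ι → ℝ) :
    ∑ u ∈ S, ∑ v ∈ S, (a u - a v) ^ 2
      = 2 * S.card * (∑ u ∈ S, (a u) ^ 2) - 2 * (∑ u ∈ S, a u) ^ 2 := by
  have h : ∀ u ∈ S, ∑ v ∈ S, (a u - a v) ^ 2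
      = (S.card : ℝ) * (a u) ^ 2 - (2 * ∑ v ∈ S, a v) * a u + ∑ v ∈ S, (a v) ^ 2 := by
    intro u _
    have e : ∀ v ∈ S, (a u - a v) ^ 2 = (a u) ^ 2 - 2 * a u * a v + (a v) ^ 2 := by
      intro v _; ring
    rw [Finset.sum_congr rfl e, Finset.sum_add_distrib, Finset.sum_sub_distrib,
      Finset.sum_const, ← Finset.mul_sum, nsmul_eq_mul]
    ring
  rw [Finset.sum_congr rfl h, Finset.sum_add_distrib, Finset.sum_sub_distrib,
    ← Finset.mul_sum, ← Finset.mul_sum, Finset.sum_const, nsmul_eq_mul]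
  ring

open Finset in
private lemma variance_bound {ι : Type*} (S : Finset ι) (a : ι → ℝ) (c L : ℝ) (hL : 0 ≤ L)
    (h : ∀ u ∈ S, a u ∈ Set.Icc c (c + L)) :
    (S.card : ℝ) * (∑ u ∈ S, (a u) ^ 2) - (∑ u ∈ S, a u) ^ 2
      ≤ (S.card : ℝ) ^ 2 * L ^ 2 / 4 := by
  set p : ℝ := (S.card : ℝ) with hp
  have hp0 : 0 ≤ p := Nat.cast_nonneg _
  set b : ι → ℝ := fun u => a u - c with hb
  have hb0 : ∀ u ∈ S, 0 ≤ b u ∧ b u ≤ L := by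
    intro u hu; obtain ⟨h1, h2⟩ := h u hu
    constructor <;> simp [hb] <;> linarith
  have h1 : ∑ u ∈ S, (b u) ^ 2 ≤ L * ∑ u ∈ S, b u := by
    rw [Finset.mul_sum]
    refine Finset.sum_le_sum fun u hu => ?_
    obtain ⟨h1, h2⟩ := hb0 u hu; nlinarith
  have h2 : 0 ≤ ∑ u ∈ S, b u := Finset.sum_nonneg fun u hu => (hb0 u hu).1
  have e1 : ∑ u ∈ S, a u = (∑ u ∈ S, b u) + p * c := by
    have : ∀ u ∈ S, a u = b u + c := by intro u _; simp [hb]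
    rw [Finset.sum_congr rfl this, Finset.sum_add_distrib, Finset.sum_const]
    push_cast; ring
  have e2 : ∑ u ∈ S, (a u) ^ 2
      = (∑ u ∈ S, (b u) ^ 2) + 2 * c * (∑ u ∈ S, b u) + p * c ^ 2 := by
    have : ∀ u ∈ S, (a u) ^ 2 = (b u) ^ 2 + 2 * c * b u + c ^ 2 := by
      intro u _; simp [hb]; ring
    rw [Finset.sum_congr rfl this, Finset.sum_add_distrib, Finset.sum_add_distrib,
      Finset.sum_const, ← Finset.mul_sum]
    push_cast; ring
  rw [e1, e2]
  have key : p * (∑ u ∈ S, (b u) ^ 2) ≤ p * (L * ∑ u ∈ S, b u) :=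
    mul_le_mul_of_nonneg_left h1 hp0
  nlinarith [sq_nonneg (p * L - 2 * ∑ u ∈ S, b u)]

private lemma fiber_bound (k m : ℕ) (hm : 1 ≤ m) (α L : ℝ) (h0 : 0 < α) (hL : 0 ≤ L)
    (hL2 : L ^ 2 * (1 / 2 * (1 + 1 / (2 * (m : ℝ) - 1))) ≤ α ^ 2)
    (c : Fin k → ℝ) (S : Finset (EuclideanSpace ℝ (Fin k)))
    (hc : ∀ y ∈ S, ∀ i, y i ∈ Set.Icc (c i) (c i + L))
    (hsep : ∀ u ∈ S, ∀ v ∈ S, u ≠ v → α * Real.sqrt k < dist u v) :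
    S.card ≤ 2 * m := by
  classical
  rcases Nat.eq_zero_or_pos k with hk | hk
  · subst hk
    have : S.card ≤ 1 := Finset.card_le_one.mpr fun a _ b _ => by
      exact PiLp.ext fun i => i.elim0
    omega
  by_contra hcon
  push_neg at hcon
  set p : ℝ := (S.card : ℝ) with hp
  have hP : 2 * (m : ℝ) + 1 ≤ p := by
    have h' : 2 * m + 1 ≤ S.card := hcon
    calc 2 * (m : ℝ) + 1 = ((2 * m + 1 : ℕ) : ℝ) := by push_cast; ring
      _ ≤ p := by rw [hp]; exact_mod_cast h'
  have hm' : (1 : ℝ) ≤ m := by exact_mod_cast hm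
  have hk' : (0 : ℝ) < k := by exact_mod_cast hk
  have hkn : (0:ℝ) ≤ (k:ℝ) := hk'.le
  set D : ℝ := ∑ u ∈ S, ∑ v ∈ S, dist u v ^ 2 with hD
  have hdist : ∀ u v : EuclideanSpace ℝ (Fin k),
      dist u v ^ 2 = ∑ i, (u i - v i) ^ 2 := by
    intro u v
    rw [EuclideanSpace.dist_eq]
    rw [Real.sq_sqrt (Finset.sum_nonneg fun i _ => by positivity)]
    simp [Real.dist_eq, sq_abs]
  -- lower bound
  have hDlow : (k : ℝ) * (p * (p - 1) * α ^ 2) ≤ D := by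
    have hterm : ∀ u ∈ S, (k : ℝ) * ((p - 1) * α ^ 2) ≤ ∑ v ∈ S, dist u v ^ 2 := by
      intro u hu
      have hsub : ∑ v ∈ S.erase u, dist u v ^ 2 ≤ ∑ v ∈ S, dist u v ^ 2 :=
        Finset.sum_le_sum_of_subset_of_nonneg (Finset.erase_subset _ _)
          (fun v _ _ => sq_nonneg _)
      have hlow : ∀ v ∈ S.erase u, α ^ 2 * k ≤ dist u v ^ 2 := by
        intro v hv
        have hvne : v ≠ u := Finset.ne_of_mem_erase hv
        have := hsep u hu v (Finset.mem_of_mem_erase hv) (Ne.symm hvne)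
        have h0' : 0 ≤ α * Real.sqrt k := by positivity
        have := pow_le_pow_left₀ h0' this.le 2
        calc α ^ 2 * k = (α * Real.sqrt k) ^ 2 := by
              rw [mul_pow, Real.sq_sqrt hkn]
          _ ≤ dist u v ^ 2 := this
      have hcount : (S.erase u).card = S.card - 1 := Finset.card_erase_of_mem hu
      have hcard1 : 1 ≤ S.card := Finset.card_pos.mpr ⟨u, hu⟩
      have : (S.erase u).card • (α ^ 2 * (k:ℝ)) ≤ ∑ v ∈ S.erase u, dist u v ^ 2 :=
        Finset.card_nsmul_le_sum _ _ _ hlow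
      rw [hcount, nsmul_eq_mul] at this
      have hcast : ((S.card - 1 : ℕ) : ℝ) = p - 1 := by
        rw [hp]; push_cast [hcard1]; ring
      rw [hcast] at this
      calc (k : ℝ) * ((p - 1) * α ^ 2) = (p - 1) * (α ^ 2 * k) := by ring
        _ ≤ ∑ v ∈ S.erase u, dist u v ^ 2 := this
        _ ≤ ∑ v ∈ S, dist u v ^ 2 := hsub
    have := Finset.card_nsmul_le_sum S _ _ hterm
    rw [nsmul_eq_mul, ← hp] at this
    calc (k : ℝ) * (p * (p - 1) * α ^ 2) = p * ((k:ℝ) * ((p - 1) * α ^ 2)) := by ring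
      _ ≤ D := this
  -- upper bound
  have hDup : D ≤ (k : ℝ) * (p ^ 2 * L ^ 2 / 2) := by
    have hswap : D = ∑ i : Fin k, ∑ u ∈ S, ∑ v ∈ S, (u i - v i) ^ 2 := by
      rw [hD]
      simp_rw [hdist]
      have step1 : ∀ u ∈ S, ∑ v ∈ S, ∑ i : Fin k, (u i - v i) ^ 2
          = ∑ i : Fin k, ∑ v ∈ S, (u i - v i) ^ 2 := fun u _ => Finset.sum_comm
      rw [Finset.sum_congr rfl step1, Finset.sum_comm]
    rw [hswap]
    have hbound : ∀ i : Fin k, ∑ u ∈ S, ∑ v ∈ S, (u i - v i) ^ 2 ≤ p ^ 2 * L ^ 2 / 2 := by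
      intro i
      rw [sum_sq_expand S (fun u => u i)]
      have hvar := variance_bound S (fun u => u i) (c i) L hL (fun u hu => hc u hu i)
      rw [← hp] at hvar ⊢
      linarith
    calc ∑ i : Fin k, ∑ u ∈ S, ∑ v ∈ S, (u i - v i) ^ 2
        ≤ ∑ _i : Fin k, p ^ 2 * L ^ 2 / 2 := Finset.sum_le_sum fun i _ => hbound i
      _ = (k : ℝ) * (p ^ 2 * L ^ 2 / 2) := by
          rw [Finset.sum_const, Finset.card_univ, Fintype.card_fin, nsmul_eq_mul]
  have A : p * (p - 1) * α ^ 2 ≤ p ^ 2 * L ^ 2 / 2 :=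
    le_of_mul_le_mul_left (hDlow.trans hDup) hk'
  set M : ℝ := 2 * (m : ℝ) - 1 with hM
  have hM1 : (1 : ℝ) ≤ M := by rw [hM]; linarith
  have hM0 : (0 : ℝ) < M := by linarith
  have B' : L ^ 2 * (M + 1) ≤ 2 * M * α ^ 2 := by
    have key : L ^ 2 * (M + 1) = (L ^ 2 * (1 / 2 * (1 + 1 / M))) * (2 * M) := by
      field_simp
    rw [key]
    calc (L ^ 2 * (1 / 2 * (1 + 1 / M))) * (2 * M) ≤ α ^ 2 * (2 * M) := by
          apply mul_le_mul_of_nonneg_right _ (by linarith)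
          exact hL2
      _ = 2 * M * α ^ 2 := by ring
  have h1 : p * (p - 1) * α ^ 2 * (M + 1) ≤ p ^ 2 * L ^ 2 / 2 * (M + 1) :=
    mul_le_mul_of_nonneg_right A (by linarith)
  have h2 : p ^ 2 * (L ^ 2 * (M + 1)) ≤ p ^ 2 * (2 * M * α ^ 2) :=
    mul_le_mul_of_nonneg_left B' (sq_nonneg p)
  have hP0 : 0 < p := by linarith
  have hα2 : 0 < α ^ 2 := by positivity
  nlinarith [mul_pos (mul_pos hP0 hα2) (show 0 < p - M - 1 by rw [hM]; linarith)]

private lemma clamp_mem (n : ℕ) (hn : 1 ≤ n) (x : ℝ) (hx0 : 0 ≤ x) (hx1 : x ≤ 1) :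
    ((min ⌊(n : ℝ) * x⌋₊ (n - 1) : ℕ) : ℝ) / n ≤ x ∧
      x ≤ ((min ⌊(n : ℝ) * x⌋₊ (n - 1) : ℕ) : ℝ) / n + 1 / n := by
  have hn0 : (0 : ℝ) < n := by exact_mod_cast hn
  constructor
  · have h1' : ((min ⌊(n : ℝ) * x⌋₊ (n - 1) : ℕ) : ℝ) ≤ (⌊(n : ℝ) * x⌋₊ : ℝ) := by
      exact_mod_cast min_le_left _ _
    have h2' : (⌊(n : ℝ) * x⌋₊ : ℝ) ≤ (n : ℝ) * x := Nat.floor_le (by positivity)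
    rw [div_le_iff₀ hn0]
    nlinarith
  · rcases le_or_gt ⌊(n : ℝ) * x⌋₊ (n - 1) with h | h
    · rw [min_eq_left h]
      have := Nat.lt_floor_add_one ((n : ℝ) * x)
      rw [← add_div, le_div_iff₀ hn0]
      nlinarith
    · rw [min_eq_right (by omega)]
      have hc : ((n - 1 : ℕ) : ℝ) = (n : ℝ) - 1 := by
        push_cast [hn]; ring
      rw [hc]
      have : ((n : ℝ) - 1) / n + 1 / n = 1 := by field_simp; ring
      linarith

/-- Let `0 < α < 1`, `m ≥ 1`, and let `Y ⊆ [0,1]^k` be a finite set whose points are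
pairwise at distance greater than `α·√k`. Then
`|Y| ≤ 2m · ⌈√((1/2)(1 + 1/(2m-1))) / α⌉^k`. -/
theorem stmt_13 (k m : ℕ) (hm : 1 ≤ m) (α : ℝ) (h0 : 0 < α) (h1 : α < 1)
    (Y : Finset (EuclideanSpace ℝ (Fin k)))
    (hcube : ∀ y ∈ Y, ∀ i, y i ∈ Set.Icc (0 : ℝ) 1)
    (hsep : ∀ u ∈ Y, ∀ v ∈ Y, u ≠ v → α * Real.sqrt k < dist u v) :
    (Y.card : ℝ) ≤
      2 * m * ((⌈Real.sqrt (1 / 2 * (1 + 1 / (2 * (m : ℝ) - 1))) / α⌉ : ℤ) : ℝ) ^ k := by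
  classical
  have hm' : (1 : ℝ) ≤ m := by exact_mod_cast hm
  set β2 : ℝ := 1 / 2 * (1 + 1 / (2 * (m : ℝ) - 1)) with hβ2def
  have hβ2 : 0 < β2 := by
    rw [hβ2def]
    have : (0:ℝ) < 2 * (m:ℝ) - 1 := by linarith
    positivity
  have hs : 0 < Real.sqrt β2 := Real.sqrt_pos.mpr hβ2
  set r : ℝ := Real.sqrt β2 / α with hrdef
  have hr : 0 < r := div_pos hs h0
  set N : ℤ := ⌈r⌉ with hNdef
  have hN : 0 < N := Int.ceil_pos.mpr hr
  set n : ℕ := N.toNat with hndef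
  have hn1 : 1 ≤ n := by omega
  have hNn : ((N : ℤ) : ℝ) = (n : ℝ) := by
    rw [hndef]; norm_cast; omega
  have hn0 : (0 : ℝ) < n := by exact_mod_cast hn1
  have hnr : r ≤ (n : ℝ) := by rw [← hNn]; exact Int.le_ceil r
  set L : ℝ := 1 / (n : ℝ) with hLdef
  have hL : 0 ≤ L := by positivity
  have hL2 : L ^ 2 * β2 ≤ α ^ 2 := by
    have h1' : Real.sqrt β2 ≤ α * n := by
      rw [hrdef, div_le_iff₀ h0] at hnr; linarith [hnr]
    have h2' : β2 ≤ (α * n) ^ 2 := by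
      nlinarith [Real.sq_sqrt hβ2.le, hs]
    have h3' : L ^ 2 * (α * n) ^ 2 = α ^ 2 := by
      rw [hLdef]; field_simp
    nlinarith [mul_le_mul_of_nonneg_left h2' (show (0:ℝ) ≤ L ^ 2 by positivity)]
  -- the grid map
  set g : EuclideanSpace ℝ (Fin k) → (Fin k → Fin n) :=
    fun y i => ⟨min ⌊(n : ℝ) * y i⌋₊ (n - 1), by omega⟩ with hgdef
  have hfiber : ∀ a ∈ Y.image g, (Y.filter fun y => g y = a).card ≤ 2 * m := by
    intro a _
    have hL2' : L ^ 2 * (1 / 2 * (1 + 1 / (2 * (m : ℝ) - 1))) ≤ α ^ 2 := by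
      rw [← hβ2def]; exact hL2
    apply fiber_bound k m hm α L h0 hL hL2' (fun i => ((a i : ℕ) : ℝ) / n)
    · intro y hy i
      rw [Finset.mem_filter] at hy
      obtain ⟨hyY, hga⟩ := hy
      obtain ⟨hy0, hy1⟩ := hcube y hyY i
      have := clamp_mem n hn1 (y i) hy0 hy1
      have hai : (a i : ℕ) = min ⌊(n : ℝ) * y i⌋₊ (n - 1) := by
        rw [← hga]
      rw [hai]
      exact ⟨this.1, this.2⟩
    · intro u hu v hv huv
      rw [Finset.mem_filter] at hu hv
      exact hsep u hu.1 v hv.1 huv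
  have hcount : Y.card ≤ 2 * m * n ^ k := by
    calc Y.card ≤ 2 * m * (Y.image g).card :=
          Finset.card_le_mul_card_image Y (2 * m) hfiber
      _ ≤ 2 * m * n ^ k := by
          apply Nat.mul_le_mul_left
          calc (Y.image g).card ≤ Fintype.card (Fin k → Fin n) := Finset.card_le_univ _
            _ = n ^ k := by simp
  calc (Y.card : ℝ) ≤ ((2 * m * n ^ k : ℕ) : ℝ) := by exact_mod_cast hcount
    _ = 2 * m * ((N : ℤ) : ℝ) ^ k := by rw [hNn]; push_cast; try ring
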